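/- Let (ν_n)_{n≥0} and ν be Borel measures on (0,∞) satisfying ∫ (1 ∧ u²) ν_n(du) < ∞ and ∫ (1 ∧ u²) ν(du) < ∞, let b ≥ 0 and K ∈ ℝ. Assume that the finite measures (1 ∧ u²)·ν_n on [0,∞) converge weakly to the finite measure (1 ∧ u²)·ν + b²·δ_0, where δ_0 is the Dirac mass at 0. Let (g_n)_{n≥0} and g be continuous bounded functions from (0,∞) to ℝ such that g(u)/u² → K as u → 0+, and such that the functions u ↦ g_n(u)/(1 ∧ u²) converge uniformly on (0,∞) to u ↦ g(u)/(1 ∧ u²). Then ∫ g_n dν_n → ∫ g dν + K·b² as n → ∞. -/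

import Mathlib

open MeasureTheory Filter Set

lemma aux_rho_meas : Measurable fun u : ℝ => (min 1 (u^2)).toNNReal :=
  (continuous_const.min (continuous_pow 2)).measurable.real_toNNReal

lemma aux_rho_pos {u : ℝ} (hu : 0 < u) : 0 < min 1 (u^2) :=
  lt_min one_pos (by positivity)

lemma aux_ae_pos (μ : Measure ℝ) (hμ : μ (Iic (0:ℝ)) = 0) : ∀ᵐ u ∂μ, 0 < u := by
  rw [ae_iff]
  convert hμ using 2
  ext u
  simp [not_lt]

lemma aux_wd_null (μ : Measure ℝ) (hμ : μ (Iic (0:ℝ)) = 0) :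
    (μ.withDensity fun u => ENNReal.ofReal (min 1 (u^2))) (Iic 0) = 0 := by
  rw [withDensity_apply _ measurableSet_Iic, Measure.restrict_eq_zero.mpr hμ,
    lintegral_zero_measure]

lemma aux_integral_eq (μ : Measure ℝ) (hμ : μ (Iic (0:ℝ)) = 0) (G : ℝ → ℝ) :
    ∫ u, G u ∂μ
      = ∫ u, G u / min 1 (u^2) ∂(μ.withDensity fun u => ENNReal.ofReal (min 1 (u^2))) := by
  have he : (fun u : ℝ => ENNReal.ofReal (min 1 (u^2)))
      = fun u => ((min 1 (u^2)).toNNReal : ENNReal) := rfl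
  rw [he, integral_withDensity_eq_integral_smul aux_rho_meas]
  refine integral_congr_ae ?_
  filter_upwards [aux_ae_pos μ hμ] with u hu
  have h1 : 0 < min 1 (u^2) := aux_rho_pos hu
  rw [NNReal.smul_def, Real.coe_toNNReal _ h1.le, smul_eq_mul, mul_comm,
    div_mul_cancel₀ _ h1.ne']

lemma aux_h_cont (glim : ℝ → ℝ) (K : ℝ) (hglimcont : ContinuousOn glim (Ioi (0:ℝ)))
    (hK : Tendsto (fun u => glim u / u ^ 2) (nhdsWithin 0 (Ioi 0)) (nhds K)) :
    Continuous (fun u : ℝ => if u ≤ 0 then K else glim u / min 1 (u^2)) := by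
  set h : ℝ → ℝ := fun u => if u ≤ 0 then K else glim u / min 1 (u^2) with hh
  rw [continuous_iff_continuousAt]
  intro x
  rcases lt_trichotomy x 0 with hx | rfl | hx
  · refine ContinuousAt.congr (f := fun _ : ℝ => K) continuousAt_const ?_
    filter_upwards [Iio_mem_nhds hx] with u hu
    simp [hh, le_of_lt (mem_Iio.mp hu)]
  · have h0 : h 0 = K := by simp [hh]
    rw [ContinuousAt, h0, ← nhdsLE_sup_nhdsGT (0:ℝ), tendsto_sup]
    constructor
    · refine Tendsto.congr' ?_ tendsto_const_nhds
      filter_upwards [self_mem_nhdsWithin] with u (hu : u ∈ Iic (0:ℝ))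
      simp [hh, hu.out]
    · refine Tendsto.congr' ?_ hK
      filter_upwards [self_mem_nhdsWithin,
        Ioo_mem_nhdsGT_of_mem (by norm_num : (0:ℝ) ∈ Ico (0:ℝ) 1)] with u hu hu'
      have h2 : u ^ 2 < 1 := by nlinarith [hu'.1, hu'.2]
      simp [hh, not_le.mpr (mem_Ioi.mp hu), min_eq_right h2.le]
  · have hc : ContinuousAt (fun u : ℝ => glim u / min 1 (u^2)) x := by
      refine ContinuousAt.div ?_ (continuous_const.min (continuous_pow 2)).continuousAt
        (aux_rho_pos hx).ne'
      exact hglimcont.continuousAt (Ioi_mem_nhds hx)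
    refine hc.congr ?_
    filter_upwards [Ioi_mem_nhds hx] with u hu
    simp [hh, not_le.mpr (mem_Ioi.mp hu)]

lemma aux_h_bdd (glim : ℝ → ℝ) (K C : ℝ) (hC : ∀ u ∈ Ioi (0:ℝ), |glim u| ≤ C)
    (hK : Tendsto (fun u => glim u / u ^ 2) (nhdsWithin 0 (Ioi 0)) (nhds K)) :
    ∃ M : ℝ, ∀ u : ℝ, |(if u ≤ 0 then K else glim u / min 1 (u^2))| ≤ M := by
  have hC0 : 0 ≤ C := (abs_nonneg _).trans (hC 1 (mem_Ioi.mpr one_pos))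
  obtain ⟨δ, hδpos, hδ⟩ := Metric.tendsto_nhdsWithin_nhds.mp hK 1 one_pos
  set δ' : ℝ := min δ 1 with hδ'
  have hδ'pos : 0 < δ' := lt_min hδpos one_pos
  set d : ℝ := min 1 (δ'^2) with hd
  have hdpos : 0 < d := aux_rho_pos hδ'pos
  refine ⟨max (|K|+1) (C/d), fun u => ?_⟩
  by_cases hu : u ≤ 0
  · simp only [if_pos hu]
    exact le_max_of_le_left (by linarith [abs_nonneg K])
  · push_neg at hu
    simp only [if_neg (not_le.mpr hu)]
    rcases lt_or_ge u δ' with h1 | h1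
    · have hu1 : u < 1 := lt_of_lt_of_le h1 (min_le_right _ _)
      have h2 : u ^ 2 ≤ 1 := by nlinarith
      have hdist : dist (glim u / u ^ 2) K < 1 := by
        refine hδ (mem_Ioi.mpr hu) ?_
        rw [Real.dist_eq, sub_zero, abs_of_pos hu]
        exact lt_of_lt_of_le h1 (min_le_left _ _)
      rw [Real.dist_eq] at hdist
      rw [min_eq_right h2]
      calc |glim u / u ^ 2| = |glim u / u ^ 2 - K + K| := by ring_nf
        _ ≤ |glim u / u ^ 2 - K| + |K| := abs_add_le _ _
        _ ≤ |K| + 1 := by linarith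
        _ ≤ _ := le_max_left _ _
    · have hmin : d ≤ min 1 (u^2) := by
        refine le_min (min_le_left _ _) ?_
        refine le_trans (min_le_right _ _) ?_
        nlinarith [hδ'pos]
      have habs : |glim u / min 1 (u^2)| = |glim u| / min 1 (u^2) := by
        rw [abs_div, abs_of_pos (aux_rho_pos hu)]
      rw [habs]
      exact le_max_of_le_right (div_le_div₀ hC0 (hC u (mem_Ioi.mpr hu)) hdpos hmin)

/-- **Proposition A.2.**
Let `(ν_n)` and `ν` be Borel measures on `(0,∞)` (here: measures on `ℝ` giving no mass to
`(-∞,0]`) with `∫ (1 ∧ u²) dν_n < ∞` and `∫ (1 ∧ u²) dν < ∞`, let `b ≥ 0` and `K ∈ ℝ`.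
Assume the finite measures `(1 ∧ u²)·ν_n` converge weakly to `(1 ∧ u²)·ν + b²·δ_0`.
Let `(g_n)` and `g` be continuous bounded functions on `(0,∞)` with `g(u)/u² → K` as
`u → 0+`, such that `u ↦ g_n(u)/(1 ∧ u²)` converges uniformly on `(0,∞)` to
`u ↦ g(u)/(1 ∧ u²)`. Then `∫ g_n dν_n → ∫ g dν + K·b²`. -/
theorem tendsto_integral_levy_measures
    (ν : ℕ → Measure ℝ) (νlim : Measure ℝ) (b K : ℝ) (hb : 0 ≤ b)
    (hνsupp : ∀ n, ν n (Iic (0:ℝ)) = 0) (hνlimsupp : νlim (Iic (0:ℝ)) = 0)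
    (hνfin : ∀ n, (∫⁻ u, ENNReal.ofReal (min 1 (u ^ 2)) ∂(ν n)) < ⊤)
    (hνlimfin : (∫⁻ u, ENNReal.ofReal (min 1 (u ^ 2)) ∂νlim) < ⊤)
    (hweak : ∀ f : ℝ → ℝ, Continuous f → (∃ C : ℝ, ∀ x, |f x| ≤ C) →
      Tendsto
        (fun n => ∫ u, f u ∂((ν n).withDensity fun u => ENNReal.ofReal (min 1 (u ^ 2))))
        atTop
        (nhds (∫ u, f u
          ∂(νlim.withDensity (fun u => ENNReal.ofReal (min 1 (u ^ 2)))
            + (ENNReal.ofReal (b ^ 2)) • Measure.dirac (0:ℝ)))))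
    (g : ℕ → ℝ → ℝ) (glim : ℝ → ℝ)
    (hgcont : ∀ n, ContinuousOn (g n) (Ioi (0:ℝ))) (hglimcont : ContinuousOn glim (Ioi (0:ℝ)))
    (hgbdd : ∀ n, ∃ C : ℝ, ∀ u ∈ Ioi (0:ℝ), |g n u| ≤ C)
    (hglimbdd : ∃ C : ℝ, ∀ u ∈ Ioi (0:ℝ), |glim u| ≤ C)
    (hK : Tendsto (fun u => glim u / u ^ 2) (nhdsWithin 0 (Ioi 0)) (nhds K))
    (hunif : TendstoUniformlyOn (fun n u => g n u / min 1 (u ^ 2))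
      (fun u => glim u / min 1 (u ^ 2)) atTop (Ioi (0:ℝ))) :
    Tendsto (fun n => ∫ u, g n u ∂(ν n)) atTop (nhds ((∫ u, glim u ∂νlim) + K * b ^ 2)) := by
  obtain ⟨C, hC⟩ := hglimbdd
  set ρ : ℝ → ENNReal := fun u => ENNReal.ofReal (min 1 (u ^ 2)) with hρ
  set h : ℝ → ℝ := fun u => if u ≤ 0 then K else glim u / min 1 (u ^ 2) with hhdef
  have hhcont : Continuous h := aux_h_cont glim K hglimcont hK
  obtain ⟨M, hM⟩ := aux_h_bdd glim K C hC hK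
  have hM' : ∀ u, |h u| ≤ M := hM
  have hM0 : 0 ≤ M := (abs_nonneg _).trans (hM' 0)
  set wlim : Measure ℝ := νlim.withDensity ρ with hwlim
  set mlim : Measure ℝ := wlim + (ENNReal.ofReal (b ^ 2)) • Measure.dirac (0:ℝ) with hmlim
  haveI hwfin : IsFiniteMeasure wlim :=
    ⟨by rw [hwlim, withDensity_apply _ MeasurableSet.univ, Measure.restrict_univ]
        exact hνlimfin⟩
  haveI : IsFiniteMeasure ((ENNReal.ofReal (b ^ 2)) • Measure.dirac (0:ℝ)) :=
    ⟨by simp [Measure.smul_apply]⟩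
  haveI : IsFiniteMeasure mlim := by rw [hmlim]; infer_instance
  have hint_h : ∀ (μ : Measure ℝ) [IsFiniteMeasure μ], Integrable h μ := by
    intro μ _
    refine (integrable_const M).mono' hhcont.aestronglyMeasurable
      (ae_of_all _ fun u => ?_)
    simpa [Real.norm_eq_abs] using hM' u
  have hlimid : ∫ u, glim u ∂νlim = ∫ u, h u ∂wlim := by
    rw [aux_integral_eq νlim hνlimsupp glim, ← hρ, ← hwlim]
    refine integral_congr_ae ?_
    have hnull : wlim (Iic 0) = 0 := by rw [hwlim, hρ]; exact aux_wd_null νlim hνlimsupp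
    filter_upwards [aux_ae_pos wlim hnull] with u hu
    simp [hhdef, not_le.mpr hu]
  have hval : ∫ u, h u ∂mlim = (∫ u, glim u ∂νlim) + K * b ^ 2 := by
    rw [hmlim, integral_add_measure (hint_h wlim) (hint_h _), ← hlimid,
      integral_smul_measure, integral_dirac]
    have h0 : h 0 = K := by simp [hhdef]
    rw [h0, ENNReal.toReal_ofReal (sq_nonneg b), smul_eq_mul]
    ring
  have stepA : Tendsto (fun n => ∫ u, h u ∂((ν n).withDensity ρ)) atTop
      (nhds ((∫ u, glim u ∂νlim) + K * b ^ 2)) := by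
    have := hweak h hhcont ⟨M, hM'⟩
    rwa [hval] at this
  have hmass_fin : ∀ n, ((ν n).withDensity ρ) univ < ⊤ := fun n => by
    rw [withDensity_apply _ MeasurableSet.univ, Measure.restrict_univ]; exact hνfin n
  have hmass : Tendsto (fun n => (((ν n).withDensity ρ) univ).toReal) atTop
      (nhds ((mlim univ).toReal)) := by
    have := hweak (fun _ => (1:ℝ)) continuous_const ⟨1, fun x => by norm_num⟩
    simpa [integral_const, smul_eq_mul, mul_one, measureReal_def] using this
  set T : ℝ := (mlim univ).toReal with hT
  have hT0 : 0 ≤ T := ENNReal.toReal_nonneg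
  have hT1 : 0 < T + 1 := by linarith
  have stepB : Tendsto (fun n => (∫ u, g n u / min 1 (u ^ 2) ∂((ν n).withDensity ρ))
      - ∫ u, h u ∂((ν n).withDensity ρ)) atTop (nhds 0) := by
    rw [NormedAddCommGroup.tendsto_nhds_zero]
    intro ε hε
    set ε' : ℝ := ε / (2 * (T + 1)) with hε'def
    have hε' : 0 < ε' := by positivity
    have hev1 : ∀ᶠ n in atTop, (((ν n).withDensity ρ) univ).toReal < T + 1 :=
      hmass.eventually_lt_const (by linarith)
    have hev2 := Metric.tendstoUniformlyOn_iff.mp hunif ε' hε'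
    filter_upwards [hev1, hev2] with n h1 h2
    haveI : IsFiniteMeasure ((ν n).withDensity ρ) := ⟨hmass_fin n⟩
    have hnull : ((ν n).withDensity ρ) (Iic 0) = 0 := by
      rw [hρ]; exact aux_wd_null (ν n) (hνsupp n)
    have haepos := aux_ae_pos _ hnull
    have hco : ContinuousOn (fun u : ℝ => g n u / min 1 (u ^ 2)) (Ioi 0) :=
      (hgcont n).div (continuous_const.min (continuous_pow 2)).continuousOn
        (fun u hu => (aux_rho_pos hu).ne')
    have hrs : ((ν n).withDensity ρ).restrict (Ioi 0) = (ν n).withDensity ρ := by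
      refine Measure.restrict_eq_self_of_ae_mem ?_
      filter_upwards [haepos] with u hu using mem_Ioi.mpr hu
    have hfm : AEStronglyMeasurable (fun u : ℝ => g n u / min 1 (u ^ 2))
        ((ν n).withDensity ρ) := by
      have := hco.aestronglyMeasurable (μ := (ν n).withDensity ρ) measurableSet_Ioi
      rwa [hrs] at this
    have hfint : Integrable (fun u : ℝ => g n u / min 1 (u ^ 2)) ((ν n).withDensity ρ) := by
      refine (integrable_const (M + ε')).mono' hfm ?_
      filter_upwards [haepos] with u hu
      have hd := h2 u (mem_Ioi.mpr hu)
      rw [Real.dist_eq] at hd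
      have hhb := hM' u
      rw [hhdef] at hhb
      simp only [if_neg (not_le.mpr hu)] at hhb
      have h4 : |g n u / min 1 (u ^ 2)| - |glim u / min 1 (u ^ 2)|
          ≤ |g n u / min 1 (u ^ 2) - glim u / min 1 (u ^ 2)| := abs_sub_abs_le_abs_sub _ _
      have h5 : |g n u / min 1 (u ^ 2) - glim u / min 1 (u ^ 2)| < ε' := by
        rw [abs_sub_comm]; exact hd
      rw [Real.norm_eq_abs]
      linarith
    have hhint : Integrable h ((ν n).withDensity ρ) := hint_h _
    rw [← integral_sub hfint hhint]
    have hbound : ‖∫ u, (g n u / min 1 (u ^ 2) - h u) ∂((ν n).withDensity ρ)‖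
        ≤ ε' * ((((ν n).withDensity ρ)) univ).toReal := by
      refine norm_integral_le_of_norm_le_const ?_
      filter_upwards [haepos] with u hu
      have hd := h2 u (mem_Ioi.mpr hu)
      rw [Real.dist_eq] at hd
      have heq : h u = glim u / min 1 (u ^ 2) := by
        rw [hhdef]; simp only [if_neg (not_le.mpr hu)]
      rw [Real.norm_eq_abs, heq, abs_sub_comm]
      exact hd.le
    have hhalf : ε' * (T + 1) = ε / 2 := by
      rw [hε'def]; field_simp
    calc ‖∫ u, (g n u / min 1 (u ^ 2) - h u) ∂((ν n).withDensity ρ)‖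
        ≤ ε' * ((((ν n).withDensity ρ)) univ).toReal := hbound
      _ ≤ ε' * (T + 1) := mul_le_mul_of_nonneg_left h1.le hε'.le
      _ < ε := by rw [hhalf]; linarith
  have heqfun : (fun n => ∫ u, g n u ∂(ν n))
      = fun n => (∫ u, h u ∂((ν n).withDensity ρ))
        + ((∫ u, g n u / min 1 (u ^ 2) ∂((ν n).withDensity ρ))
          - ∫ u, h u ∂((ν n).withDensity ρ)) := by
    funext n
    rw [aux_integral_eq (ν n) (hνsupp n) (g n), ← hρ]
    ring
  rw [heqfun]
  simpa using stepA.add stepB
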